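/- Let E be the graph with two vertices 1, 2, loops ℓ_1, ℓ_2 and one edge r_1 from 1 to 2 (the graph of S³_q), and identify 𝒢¹ with ℤ × R_tail (R_tail = ℕ² ∪ {(+∞,+∞)} ⊆ ℕ̄²) via (x,k,y) ↦ (k, Ψ(x), Ψ(y)), where Ψ(ℓ_2^∞) = 0, Ψ(ℓ_1^m r_1 ℓ_2^∞) = m+1, Ψ(ℓ_1^∞) = +∞, with the transported graph-groupoid topology. Let F¹ := {(k_0,k_1,m_1) ∈ ℤ × ℤ × ℕ̄ : (m_1 = +∞ or m_1 + k_1 ≥ 0) and (m_1 = +∞ ⟹ k_0 + k_1 = 0)} with the subspace topology of ℤ × ℤ × ℕ̄ (ℤ discrete). Then the map (k_0,k_1,m_1) ↦ (k_0, k_1 + m_1, m_1) (where k_1 + (+∞) = +∞) is a homeomorphism from F¹ onto ℤ × R_tail; moreover it carries the composition (k_0',k_1',k_1+m_1)·(k_0,k_1,m_1) = (k_0+k_0', k_1+k_1', m_1) of F¹ to the composition (j,x,y)·(k,y,z) = (j+k,x,z) of 𝒢¹. -/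

import Mathlib

/-! Basic definitions: directed graphs, infinite path space, shift, finite paths,
shift equivalence, the graph groupoid and its topology (Kumjian-Pask-Raeburn-Renault). -/

variable {V E : Type*}

/-- The space `E^∞` of right-infinite paths of the graph with edge set `E`, source map `s`
and target map `t`, as a subset of the product `ℕ → E` (sequences of composable edges). -/
def PathSp (s t : E → V) : Set (ℕ → E) := {x | ∀ i : ℕ, t (x i) = s (x (i + 1))}

/-- The one-sided shift on the infinite path space. -/
def shiftP (s t : E → V) (x : PathSp s t) : PathSp s t :=
  ⟨fun i => x.1 (i + 1), fun i => x.2 (i + 1)⟩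

/-- Shift equivalence with lag `k`. -/
def SEquiv {X : Type*} (σ : X → X) (k : ℤ) (x y : X) : Prop :=
  ∃ j : ℕ, 0 ≤ (j : ℤ) + k ∧ σ^[j] x = σ^[((j : ℤ) + k).toNat] y

/-- A finite path in the graph: a composable (possibly empty) list of edges together with a
source vertex (so that vertices are the paths of length `0`). -/
structure FinPath (s t : E → V) where
  src : V
  edges : List E
  chain : edges.Chain' (fun e f => t e = s f)
  srcOk : ∀ e ∈ edges.head?, s e = src

/-- The target of a finite path (its source, if the path has length 0). -/
def FinPath.tgt {s t : E → V} (α : FinPath s t) : V :=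
  α.edges.getLast?.elim α.src t

/-- Concatenation of a finite list of edges with an infinite sequence of edges. -/
def catSeq (l : List E) (z : ℕ → E) : ℕ → E :=
  fun i => if h : i < l.length then l.get ⟨i, h⟩ else z (i - l.length)

/-- The basic set `Z(α,β) = {(αz, |β|-|α|, βz) : z ∈ E^∞, s(z) = t(α) = t(β)}` of the
graph groupoid. -/
def ZSet (s t : E → V) (α β : FinPath s t) :
    Set (↥(PathSp s t) × ℤ × ↥(PathSp s t)) :=
  {q | ∃ z : ↥(PathSp s t), s (z.1 0) = α.tgt ∧ s (z.1 0) = β.tgt ∧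
    q.1.1 = catSeq α.edges z.1 ∧
    q.2.1 = (β.edges.length : ℤ) - (α.edges.length : ℤ) ∧
    q.2.2.1 = catSeq β.edges z.1}

/-- The morphism space `𝒢¹ = {(x,k,y) : x ∼ₖ y}` of the graph groupoid. -/
def G1 (s t : E → V) : Type _ :=
  {q : ↥(PathSp s t) × ℤ × ↥(PathSp s t) // SEquiv (shiftP s t) q.2.1 q.1 q.2.2}

/-- The topology of the graph groupoid: generated by the sets `Z(α,β)` with
`t(α) = t(β)`. -/
def G1Top (s t : E → V) : TopologicalSpace (G1 s t) :=
  TopologicalSpace.generateFrom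
    {U | ∃ α β : FinPath s t, α.tgt = β.tgt ∧ U = Subtype.val ⁻¹' ZSet s t α β}

/-! The graph of the quantum sphere `S^{2n+1}_q` (Hong–Szymański, appendix version):
vertices `1, …, n+1` (here `Fin (n+1)`), a loop `ℓᵢ` at every vertex `i` (here `Sum.inl i`)
and an edge `rᵢ : i → i+1` for `1 ≤ i ≤ n` (here `Sum.inr i` for `i : Fin n`). -/

/-- The edge set of the graph of `S^{2n+1}_q`. -/
abbrev SphE (n : ℕ) := Fin (n + 1) ⊕ Fin n

/-- Source map of the graph of `S^{2n+1}_q`. -/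
def sphS (n : ℕ) : SphE n → Fin (n + 1)
  | .inl i => i
  | .inr i => i.castSucc

/-- Target map of the graph of `S^{2n+1}_q`. -/
def sphT (n : ℕ) : SphE n → Fin (n + 1)
  | .inl i => i
  | .inr i => i.succ

/-- The sum `k + m ∈ ℕ̄` of `k : ℤ` and `m : ℕ̄` (with `k + ∞ = ∞`; for finite `m` the value
is clamped to `0` when `m + k < 0`, which is immaterial under the condition `m + k ≥ 0`). -/
def addZE (k : ℤ) (m : ℕ∞) : ℕ∞ :=
  if m = ⊤ then ⊤ else ((((m.toNat : ℤ) + k).toNat : ℕ) : ℕ∞)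

/-- The tail-equivalence relation `R_tail = ℕ² ∪ {(+∞, +∞)} ⊆ ℕ̄²` for `S³_q`. -/
def RT : Set (ℕ∞ × ℕ∞) :=
  {q | (q.1 ≠ ⊤ ∧ q.2 ≠ ⊤) ∨ (q.1 = ⊤ ∧ q.2 = ⊤)}

/-- Membership in Sheu's groupoid `𝓕¹` for `S³_q`: `(k₀,k₁,m₁) ∈ ℤ × ℤ × ℕ̄` with
`m₁ = +∞ ∨ m₁ + k₁ ≥ 0`, and `k₀ + k₁ = 0` whenever `m₁ = +∞`. -/
def F1cond (p : ℤ × ℤ × ℕ∞) : Prop :=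
  (p.2.2 = ⊤ ∨ 0 ≤ (p.2.2.toNat : ℤ) + p.2.1) ∧ (p.2.2 = ⊤ → p.1 + p.2.1 = 0)

open Topology

section GeneralGraph

variable {V E : Type*} {s t : E → V}

/-- Components of iterates of the shift. -/
lemma shift_iter_apply (x : ↥(PathSp s t)) (j i : ℕ) :
    ((shiftP s t)^[j] x).1 i = x.1 (i + j) := by
  induction j generalizing i with
  | zero => rfl
  | succ j ih =>
    rw [Function.iterate_succ_apply']
    show ((shiftP s t)^[j] x).1 (i + 1) = x.1 (i + (j + 1))
    rw [ih (i + 1)]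
    have e : i + 1 + j = i + (j + 1) := by omega
    rw [e]

/-- The prefix of length `n` of an infinite path, as a finite path. -/
def prefixPath (x : ↥(PathSp s t)) (n : ℕ) : FinPath s t where
  src := s (x.1 0)
  edges := List.ofFn (fun i : Fin n => x.1 i)
  chain := by
    unfold List.Chain'
    rw [List.isChain_iff_getElem]
    intro i h
    rw [List.getElem_ofFn, List.getElem_ofFn]
    simp only [List.length_ofFn] at h
    have := x.2 i
    simpa using this
  srcOk := by
    intro e he
    cases n with
    | zero => simp at he
    | succ n =>
      rw [List.ofFn_succ] at he
      simp at he
      rw [he]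

@[simp] lemma prefixPath_length (x : ↥(PathSp s t)) (n : ℕ) :
    (prefixPath x n).edges.length = n := by simp [prefixPath]

lemma prefixPath_tgt (x : ↥(PathSp s t)) (n : ℕ) :
    (prefixPath x n).tgt = s (x.1 n) := by
  cases n with
  | zero => rfl
  | succ n =>
    have h : (prefixPath x (n+1)).edges.getLast? = some (x.1 n) := by
      show (List.ofFn (fun i : Fin (n+1) => x.1 i)).getLast? = _
      rw [List.ofFn_succ']
      simp
    unfold FinPath.tgt
    rw [h]
    exact x.2 n

lemma catSeq_prefixPath (x : ↥(PathSp s t)) (n : ℕ) :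
    catSeq (prefixPath x n).edges (fun i => x.1 (i + n)) = x.1 := by
  funext i
  unfold catSeq
  rcases lt_or_ge i n with h | h
  · rw [dif_pos (by simpa using h)]
    simp [prefixPath]
  · rw [dif_neg (by simpa using not_lt.mpr h)]
    show x.1 (i - (prefixPath x n).edges.length + n) = x.1 i
    rw [prefixPath_length]
    have e : i - n + n = i := by omega
    rw [e]

/-- A set is open in a generated topology if every point has a basic neighborhood inside it. -/
lemma isOpen_generateFrom_of_basic {X : Type*} {T : Set (Set X)} {A : Set X}
    (h : ∀ a ∈ A, ∃ B ∈ T, a ∈ B ∧ B ⊆ A) :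
    IsOpen[TopologicalSpace.generateFrom T] A := by
  letI := TopologicalSpace.generateFrom T
  have : A = ⋃₀ {B | B ∈ T ∧ B ⊆ A} := by
    apply Set.eq_of_subset_of_subset
    · intro a ha
      obtain ⟨B, hBT, haB, hBA⟩ := h a ha
      exact ⟨B, ⟨hBT, hBA⟩, haB⟩
    · rintro a ⟨B, ⟨-, hBA⟩, haB⟩
      exact hBA haB
  rw [this]
  exact isOpen_sUnion fun B hB => TopologicalSpace.isOpen_generateFrom_of_mem hB.1

end GeneralGraph

section Sphere

/-- All-`ℓ₁` path function. -/
def pInfF : ℕ → SphE 1 := fun _ => Sum.inl 0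
/-- All-`ℓ₂` path function. -/
def pTwoF : ℕ → SphE 1 := fun _ => Sum.inl 1
/-- The path function `ℓ₁^m r₁ ℓ₂^∞`. -/
def pMF (m : ℕ) : ℕ → SphE 1 := fun j =>
  if j < m then Sum.inl 0 else if j = m then Sum.inr 0 else Sum.inl 1

lemma pInfF_mem : pInfF ∈ PathSp (sphS 1) (sphT 1) := fun _ => rfl

lemma pTwoF_mem : pTwoF ∈ PathSp (sphS 1) (sphT 1) := fun _ => rfl

lemma pMF_mem (m : ℕ) : pMF m ∈ PathSp (sphS 1) (sphT 1) := by
  intro i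
  unfold pMF
  split_ifs with h1 h2 h3 h4 h5 h6 h7 <;> first | rfl | omega | (exfalso; omega) | decide

/-- `ℓ₁^∞`. -/
def pInf : ↥(PathSp (sphS 1) (sphT 1)) := ⟨pInfF, pInfF_mem⟩
/-- `ℓ₂^∞`. -/
def pTwo : ↥(PathSp (sphS 1) (sphT 1)) := ⟨pTwoF, pTwoF_mem⟩
/-- `ℓ₁^m r₁ ℓ₂^∞`. -/
def pM (m : ℕ) : ↥(PathSp (sphS 1) (sphT 1)) := ⟨pMF m, pMF_mem m⟩

lemma succ_one (x : ↥(PathSp (sphS 1) (sphT 1))) (j : ℕ) (h : sphT 1 (x.1 j) = 1) :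
    x.1 (j + 1) = Sum.inl 1 := by
  have h2 := x.2 j
  rw [h] at h2
  rcases hx : x.1 (j+1) with i | i
  · rw [hx] at h2
    have : i = 1 := by simpa [sphS] using h2.symm
    rw [this]
  · exfalso
    rw [hx] at h2
    have : i = 0 := Subsingleton.elim _ _
    rw [this] at h2
    exact absurd h2.symm (by decide)

lemma tail_ones (x : ↥(PathSp (sphS 1) (sphT 1))) (m : ℕ) (h : sphT 1 (x.1 m) = 1) :
    ∀ i, m < i → x.1 i = Sum.inl 1 := by
  have key : ∀ d, x.1 (m + d + 1) = Sum.inl 1 := by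
    intro d
    induction d with
    | zero => exact succ_one x m h
    | succ d ih =>
      have : sphT 1 (x.1 (m + d + 1)) = 1 := by rw [ih]; rfl
      have h3 := succ_one x (m + d + 1) this
      rw [show m + (d+1) + 1 = m + d + 1 + 1 by omega]
      exact h3
  intro i hi
  have := key (i - m - 1)
  rwa [show m + (i - m - 1) + 1 = i by omega] at this

/-- Classification of infinite paths in the graph of `S³_q`. -/
lemma classify (x : ↥(PathSp (sphS 1) (sphT 1))) :
    x = pInf ∨ x = pTwo ∨ ∃ m, x = pM m := by
  by_cases hall : ∀ j, x.1 j = Sum.inl 0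
  · exact Or.inl (Subtype.ext (funext hall))
  · push_neg at hall
    have hex : ∃ j, ¬ (x.1 j = Sum.inl 0) := hall
    set m := Nat.find hex with hmdef
    have hm : ¬ (x.1 m = Sum.inl 0) := Nat.find_spec hex
    have hlt : ∀ i, i < m → x.1 i = Sum.inl 0 := by
      intro i hi
      by_contra hc
      have : m ≤ i := Nat.find_le hc
      omega
    rcases hxm : x.1 m with i | i
    · -- x.1 m = Sum.inl i, i must be 1
      have hi1 : i = 1 := by
        have hne : i ≠ 0 := fun h => hm (by rw [hxm, h])
        have h1 : (i : ℕ) ≠ 0 := fun h => hne (Fin.ext h)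
        have h2 : (i : ℕ) < 2 := i.isLt
        exact Fin.ext (by simp only [Fin.val_one]; omega)
      subst hi1
      -- show m = 0, else contradiction with previous edge
      have hm0 : m = 0 := by
        by_contra hm0
        have hprev : x.1 (m - 1) = Sum.inl 0 := hlt _ (by omega)
        have h2 := x.2 (m - 1)
        rw [hprev, show m - 1 + 1 = m by omega, hxm] at h2
        exact absurd h2 (by decide)
      right; left
      apply Subtype.ext; funext j
      rcases Nat.eq_zero_or_pos j with hj | hj
      · rw [hj, ← hm0, hxm]; rfl
      · exact tail_ones x m (by rw [hxm]; rfl) j (by omega)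
    · -- x.1 m = Sum.inr i : this is pM m
      have hi0 : i = 0 := Subsingleton.elim _ _
      subst hi0
      right; right
      refine ⟨m, Subtype.ext (funext fun j => ?_)⟩
      show x.1 j = pMF m j
      unfold pMF
      split_ifs with h1 h2
      · exact hlt j h1
      · rw [h2, hxm]
      · exact tail_ones x m (by rw [hxm]; rfl) j (by omega)

lemma pTwo_ne_pInf : pTwo ≠ pInf := by
  intro h
  have := congrFun (congrArg Subtype.val h) 0
  exact absurd this (by decide)

lemma pM_ne_pInf (m : ℕ) : pM m ≠ pInf := by
  intro h
  have := congrFun (congrArg Subtype.val h) m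
  simp only [pM, pMF, pInf, pInfF, lt_irrefl, if_false, if_pos rfl] at this
  exact absurd this (by simp)

lemma pM_ne_pTwo (m : ℕ) : pM m ≠ pTwo := by
  intro h
  have := congrFun (congrArg Subtype.val h) m
  simp only [pM, pMF, pTwo, pTwoF, lt_irrefl, if_false, if_pos rfl] at this
  exact absurd this (by simp)

/-- `z` starting at vertex `2` is `ℓ₂^∞`. -/
lemma src_one {z : ↥(PathSp (sphS 1) (sphT 1))} (h : sphS 1 (z.1 0) = 1) : z = pTwo := by
  rcases classify z with hz | hz | ⟨n, hz⟩
  · rw [hz] at h; exact absurd h (by decide)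
  · exact hz
  · exfalso
    rw [hz] at h
    revert h
    show sphS 1 (pMF n 0) ≠ 1
    unfold pMF
    split_ifs <;> first | omega | decide

/-- `z` starting at vertex `1` is `ℓ₁^∞` or `ℓ₁^n r₁ ℓ₂^∞`. -/
lemma src_zero {z : ↥(PathSp (sphS 1) (sphT 1))} (h : sphS 1 (z.1 0) = 0) :
    z = pInf ∨ ∃ n, z = pM n := by
  rcases classify z with hz | hz | ⟨n, hz⟩
  · exact Or.inl hz
  · rw [hz] at h; exact absurd h (by decide)
  · exact Or.inr ⟨n, hz⟩

lemma sphS_pMF_zero (m : ℕ) : sphS 1 (pMF m 0) = 0 := by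
  unfold pMF; split_ifs <;> first | omega | decide

end Sphere

section Dynamics

local notation "σ" => shiftP (sphS 1) (sphT 1)

lemma shift_pInf : σ pInf = pInf := Subtype.ext rfl

lemma shift_pTwo : σ pTwo = pTwo := Subtype.ext rfl

lemma shift_pM0 : σ (pM 0) = pTwo := by
  apply Subtype.ext; funext i
  show pMF 0 (i + 1) = pTwoF i
  unfold pMF pTwoF
  split_ifs <;> first | rfl | omega | contradiction

lemma shift_pMsucc (m : ℕ) : σ (pM (m + 1)) = pM m := by
  apply Subtype.ext; funext i
  show pMF (m + 1) (i + 1) = pMF m i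
  unfold pMF
  split_ifs <;> first | rfl | omega

lemma shift_iter_pInf (j : ℕ) : σ^[j] pInf = pInf := Function.iterate_fixed shift_pInf j

lemma shift_iter_pTwo (j : ℕ) : σ^[j] pTwo = pTwo := Function.iterate_fixed shift_pTwo j

lemma shift_iter_pM_ge : ∀ (j m : ℕ), m < j → σ^[j] (pM m) = pTwo := by
  intro j
  induction j with
  | zero => omega
  | succ j ih =>
    intro m hm
    rw [Function.iterate_succ_apply]
    cases m with
    | zero => rw [shift_pM0, shift_iter_pTwo]
    | succ m => rw [shift_pMsucc]; exact ih m (by omega)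

lemma shift_iter_pM_le : ∀ (j m : ℕ), j ≤ m → σ^[j] (pM m) = pM (m - j) := by
  intro j
  induction j with
  | zero => intro m _; rfl
  | succ j ih =>
    intro m hm
    cases m with
    | zero => omega
    | succ m =>
      rw [Function.iterate_succ_apply, shift_pMsucc]
      rw [ih m (by omega)]
      congr 1
      omega

lemma iter_eq_pInf {x : ↥(PathSp (sphS 1) (sphT 1))} {j : ℕ} (h : σ^[j] x = pInf) :
    x = pInf := by
  rcases classify x with hx | hx | ⟨m, hx⟩
  · exact hx
  · rw [hx, shift_iter_pTwo] at h
    exact absurd h pTwo_ne_pInf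
  · exfalso
    rcases le_or_gt j m with hj | hj
    · rw [hx, shift_iter_pM_le j m hj] at h
      exact pM_ne_pInf _ h
    · rw [hx, shift_iter_pM_ge j m hj] at h
      exact pTwo_ne_pInf h

lemma eventually_pTwo {x : ↥(PathSp (sphS 1) (sphT 1))} (h : x ≠ pInf) :
    ∃ N : ℕ, ∀ j, N ≤ j → σ^[j] x = pTwo := by
  rcases classify x with hx | hx | ⟨m, hx⟩
  · exact absurd hx h
  · exact ⟨0, fun j _ => by rw [hx, shift_iter_pTwo]⟩
  · exact ⟨m + 1, fun j hj => by rw [hx, shift_iter_pM_ge j m (by omega)]⟩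

/-- The inverse of `Ψ`. -/
noncomputable def Θ (m : ℕ∞) : ↥(PathSp (sphS 1) (sphT 1)) :=
  if m = ⊤ then pInf else if m = 0 then pTwo else pM (m.toNat - 1)

@[simp] lemma Θ_top : Θ ⊤ = pInf := if_pos rfl

@[simp] lemma Θ_zero : Θ 0 = pTwo := by unfold Θ; rw [if_neg (by simp), if_pos rfl]

lemma Θ_coe_succ (n : ℕ) : Θ ((n + 1 : ℕ) : ℕ∞) = pM n := by
  have h1 : ((n + 1 : ℕ) : ℕ∞) ≠ ⊤ := by exact_mod_cast WithTop.coe_ne_top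
  have h2 : ((n + 1 : ℕ) : ℕ∞) ≠ 0 := by exact_mod_cast Nat.succ_ne_zero n
  unfold Θ
  rw [if_neg h1, if_neg h2, ENat.toNat_coe]
  norm_num

lemma Θ_ne_pInf {m : ℕ∞} (h : m ≠ ⊤) : Θ m ≠ pInf := by
  lift m to ℕ using h
  cases m with
  | zero => rw [Nat.cast_zero, Θ_zero]; exact pTwo_ne_pInf
  | succ n => rw [Θ_coe_succ]; exact pM_ne_pInf n

/-- Concatenating a list of `ℓ₁`-edges with `ℓ₁^∞`. -/
lemma catSeq_all0_pInfF (l : List (SphE 1)) (h : ∀ e ∈ l, e = Sum.inl 0) :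
    catSeq l pInfF = pInfF := by
  funext i
  unfold catSeq
  split
  · exact h _ (List.get_mem l _)
  · rfl

/-- Concatenating a list of `ℓ₁`-edges with `ℓ₁^n r₁ ℓ₂^∞`. -/
lemma catSeq_all0_pMF (l : List (SphE 1)) (h : ∀ e ∈ l, e = Sum.inl 0) (n : ℕ) :
    catSeq l (pMF n) = pMF (l.length + n) := by
  funext i
  unfold catSeq
  split
  case isTrue hi =>
    rw [h _ (List.get_mem l _)]
    unfold pMF
    rw [if_pos (by omega)]
  case isFalse hi =>
    unfold pMF
    split_ifs <;> first | rfl | omega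

end Dynamics

section EquivPart

local notation "σ" => shiftP (sphS 1) (sphT 1)

lemma shift_iter_Θ_fin {a : ℕ∞} (ha : a ≠ ⊤) {j : ℕ} (hj : a.toNat ≤ j) :
    σ^[j] (Θ a) = pTwo := by
  lift a to ℕ using ha
  rw [ENat.toNat_coe] at hj
  cases a with
  | zero => rw [Nat.cast_zero, Θ_zero, shift_iter_pTwo]
  | succ n => rw [Θ_coe_succ, shift_iter_pM_ge j n (by omega)]

@[simp] lemma addZE_top (k : ℤ) : addZE k ⊤ = ⊤ := if_pos rfl

lemma addZE_coe {m : ℕ∞} (hm : m ≠ ⊤) (k : ℤ) :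
    addZE k m = ((((m.toNat : ℤ) + k).toNat : ℕ) : ℕ∞) := if_neg hm

lemma addZE_ne_top {m : ℕ∞} (hm : m ≠ ⊤) (k : ℤ) : addZE k m ≠ ⊤ := by
  rw [addZE_coe hm]
  exact WithTop.coe_ne_top

lemma addZE_toNat {m : ℕ∞} (hm : m ≠ ⊤) (k : ℤ) :
    ((addZE k m).toNat : ℤ) = ((m.toNat : ℤ) + k).toNat := by
  rw [addZE_coe hm, ENat.toNat_coe]

/-- The `SEquiv` witness for elements of `𝓕¹`. -/
lemma mem_G1F (p : ℤ × ℤ × ℕ∞) (h : F1cond p) :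
    SEquiv σ p.1 (Θ (addZE p.2.1 p.2.2)) (Θ p.2.2) := by
  obtain ⟨k0, k1, m1⟩ := p
  by_cases hm : m1 = ⊤
  · subst hm
    refine ⟨(-k0).toNat, by omega, ?_⟩
    rw [addZE_top, Θ_top, shift_iter_pInf, shift_iter_pInf]
  · have hc : (k0, k1, m1).2.2 = ⊤ ∨ 0 ≤ ((k0, k1, m1).2.2.toNat : ℤ) + (k0, k1, m1).2.1 := h.1
    simp only at hc
    set j := m1.toNat + (addZE k1 m1).toNat + (-k0).toNat + 1 with hj
    refine ⟨j, by omega, ?_⟩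
    have h1 : σ^[j] (Θ (addZE k1 m1)) = pTwo := by
      apply shift_iter_Θ_fin (addZE_ne_top hm k1)
      omega
    have h2 : σ^[((j : ℤ) + k0).toNat] (Θ m1) = pTwo := by
      apply shift_iter_Θ_fin hm
      omega
    rw [h1, h2]

/-- The middle component of the inverse map. -/
def sheuDelta (v : ℤ × ℕ∞ × ℕ∞) : ℤ :=
  if v.2.2 = ⊤ then -v.1 else ((v.2.1.toNat : ℤ) - (v.2.2.toNat : ℤ))

/-- The forward map on ambient triples. -/
def sheuToA (p : ℤ × ℤ × ℕ∞) : ℤ × ℕ∞ × ℕ∞ := (p.1, addZE p.2.1 p.2.2, p.2.2)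

/-- The backward map on ambient triples. -/
def sheuInvA (v : ℤ × ℕ∞ × ℕ∞) : ℤ × ℤ × ℕ∞ := (v.1, sheuDelta v, v.2.2)

lemma sheuToA_mem (p : ℤ × ℤ × ℕ∞) : ((sheuToA p).2.1, (sheuToA p).2.2) ∈ RT := by
  by_cases hm : p.2.2 = ⊤
  · right; exact ⟨by simp [sheuToA, hm], by simp [sheuToA, hm]⟩
  · left; exact ⟨addZE_ne_top hm _, hm⟩

lemma sheuDelta_top (k : ℤ) (a : ℕ∞) : sheuDelta (k, a, ⊤) = -k := by
  unfold sheuDelta; rw [if_pos]; rfl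

lemma sheuDelta_coe (k : ℤ) (a : ℕ∞) {b : ℕ∞} (hb : b ≠ ⊤) :
    sheuDelta (k, a, b) = (a.toNat : ℤ) - (b.toNat : ℤ) := by
  unfold sheuDelta
  rw [if_neg]
  exact hb

lemma sheuInvA_mem (v : ℤ × ℕ∞ × ℕ∞) (hv : (v.2.1, v.2.2) ∈ RT) : F1cond (sheuInvA v) := by
  obtain ⟨k, a, b⟩ := v
  constructor
  · by_cases hb : b = ⊤
    · exact Or.inl hb
    · right
      show (0:ℤ) ≤ (b.toNat : ℤ) + sheuDelta (k, a, b)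
      rw [sheuDelta_coe k a hb]
      omega
  · intro hb
    have hb' : b = ⊤ := hb
    subst hb'
    show k + sheuDelta (k, a, ⊤) = 0
    rw [sheuDelta_top]
    omega

lemma sheuInvA_toA (p : ℤ × ℤ × ℕ∞) (hp : F1cond p) : sheuInvA (sheuToA p) = p := by
  obtain ⟨k0, k1, m1⟩ := p
  refine Prod.ext rfl (Prod.ext ?_ rfl)
  show sheuDelta (k0, addZE k1 m1, m1) = k1
  by_cases hm : m1 = ⊤
  · subst hm
    rw [sheuDelta_top]
    have h2 : k0 + k1 = 0 := hp.2 rfl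
    omega
  · rw [sheuDelta_coe _ _ hm]
    have ht := addZE_toNat hm k1
    have hc0 : (k0, k1, m1).2.2 = ⊤ ∨ 0 ≤ ((k0, k1, m1).2.2.toNat : ℤ) + (k0, k1, m1).2.1 :=
      hp.1
    simp only at hc0
    have hc := hc0.resolve_left hm
    omega

lemma sheuToA_invA (v : ℤ × ℕ∞ × ℕ∞) (hv : (v.2.1, v.2.2) ∈ RT) : sheuToA (sheuInvA v) = v := by
  obtain ⟨k, a, b⟩ := v
  refine Prod.ext rfl (Prod.ext ?_ rfl)
  show addZE (sheuDelta (k, a, b)) b = a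
  by_cases hb : b = ⊤
  · subst hb
    have ha : a = ⊤ := by
      rcases hv with h | h
      · exact absurd rfl h.2
      · exact h.1
    subst ha
    rw [addZE_top]
  · have ha : a ≠ ⊤ := by
      rcases hv with h | h
      · exact h.1
      · exact absurd h.2 hb
    rw [sheuDelta_coe k a hb, addZE_coe hb]
    have h2 : (((b.toNat : ℤ) + ((a.toNat : ℤ) - (b.toNat : ℤ))).toNat) = a.toNat := by omega
    rw [h2]
    exact ENat.coe_toNat ha

/-- The underlying equivalence. -/
noncomputable def sheuEquiv :
    {p : ℤ × ℤ × ℕ∞ // F1cond p} ≃ {p : ℤ × ℕ∞ × ℕ∞ // (p.2.1, p.2.2) ∈ RT} where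
  toFun p := ⟨sheuToA p.1, sheuToA_mem p.1⟩
  invFun s := ⟨sheuInvA s.1, sheuInvA_mem s.1 s.2⟩
  left_inv p := Subtype.ext (sheuInvA_toA p.1 p.2)
  right_inv s := Subtype.ext (sheuToA_invA s.1 s.2)

end EquivPart

section TopWork

local notation "σ" => shiftP (sphS 1) (sphT 1)
local notation "GG" => G1 (sphS 1) (sphT 1)

/-- The generating family of the graph groupoid topology. -/
def gens : Set (Set GG) :=
  {U | ∃ α β : FinPath (sphS 1) (sphT 1), α.tgt = β.tgt ∧
    U = Subtype.val ⁻¹' ZSet (sphS 1) (sphT 1) α β}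

lemma G1Top_eq : G1Top (sphS 1) (sphT 1) = TopologicalSpace.generateFrom gens := rfl

/-- Every morphism whose paths have finite `Ψ`-value is isolated. -/
lemma isolated_basic (g : GG) (hx : g.1.1 ≠ pInf) (hy : g.1.2.2 ≠ pInf) :
    ∃ B ∈ gens, g ∈ B ∧ B ⊆ {g} := by
  obtain ⟨Nx, hNx⟩ := eventually_pTwo hx
  obtain ⟨Ny, hNy⟩ := eventually_pTwo hy
  set x : ↥(PathSp (sphS 1) (sphT 1)) := g.1.1 with hxdef
  set y : ↥(PathSp (sphS 1) (sphT 1)) := g.1.2.2 with hydef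
  set k : ℤ := g.1.2.1 with hkdef
  set jα : ℕ := Nx + Ny + (-k).toNat with hjα
  set jβ : ℕ := ((jα : ℤ) + k).toNat with hjβ
  have hjβx : (jβ : ℤ) = (jα : ℤ) + k := by omega
  have hjβy : Ny ≤ jβ := by omega
  have hxj : σ^[jα] x = pTwo := hNx jα (by omega)
  have hyj : σ^[jβ] y = pTwo := hNy jβ hjβy
  set α := prefixPath x jα with hα
  set β := prefixPath y jβ with hβ
  have hxv : x.1 jα = Sum.inl 1 := by
    have h0 := shift_iter_apply x jα 0
    rw [hxj] at h0
    rw [← Nat.zero_add jα]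
    exact h0.symm
  have hyv : y.1 jβ = Sum.inl 1 := by
    have h0 := shift_iter_apply y jβ 0
    rw [hyj] at h0
    rw [← Nat.zero_add jβ]
    exact h0.symm
  have htgtα : α.tgt = 1 := by rw [hα, prefixPath_tgt, hxv]; rfl
  have htgtβ : β.tgt = 1 := by rw [hβ, prefixPath_tgt, hyv]; rfl
  have hcatx : catSeq α.edges pTwoF = x.1 := by
    have h1 := catSeq_prefixPath x jα
    have h2 : (fun i => x.1 (i + jα)) = pTwoF := by
      funext i
      have := shift_iter_apply x jα i
      rw [hxj] at this
      exact this.symm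
    rw [h2] at h1
    exact h1
  have hcaty : catSeq β.edges pTwoF = y.1 := by
    have h1 := catSeq_prefixPath y jβ
    have h2 : (fun i => y.1 (i + jβ)) = pTwoF := by
      funext i
      have := shift_iter_apply y jβ i
      rw [hyj] at this
      exact this.symm
    rw [h2] at h1
    exact h1
  refine ⟨Subtype.val ⁻¹' ZSet (sphS 1) (sphT 1) α β,
    ⟨α, β, by rw [htgtα, htgtβ], rfl⟩, ?_, ?_⟩
  · refine ⟨pTwo, ?_, ?_, ?_, ?_, ?_⟩
    · rw [htgtα]; rfl
    · rw [htgtβ]; rfl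
    · exact hcatx.symm
    · show k = (β.edges.length : ℤ) - (α.edges.length : ℤ)
      rw [hα, hβ, prefixPath_length, prefixPath_length]
      omega
    · exact hcaty.symm
  · intro g' hg'
    obtain ⟨z, hz1, hz2, hx', hk', hy'⟩ := hg'
    have hzt : z = pTwo := src_one (by rw [hz1, htgtα])
    rw [hzt] at hx' hy'
    have hgx : g'.1.1 = x := Subtype.ext (by rw [hx']; exact hcatx)
    have hgy : g'.1.2.2 = y := Subtype.ext (by rw [hy']; exact hcaty)
    have hgk : g'.1.2.1 = k := by
      rw [hk', hα, hβ, prefixPath_length, prefixPath_length]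
      omega
    have : g' = g := by
      apply Subtype.ext
      refine Prod.ext hgx (Prod.ext hgk hgy)
    rw [this]
    rfl

/-- The basic tube neighborhoods of the points at infinity. -/
def tubeSet (p q : ℕ) : Set GG :=
  Subtype.val ⁻¹' ZSet (sphS 1) (sphT 1) (prefixPath pInf p) (prefixPath pInf q)

lemma pInf_prefix_all0 (n : ℕ) : ∀ e ∈ (prefixPath pInf n).edges, e = Sum.inl 0 := by
  intro e he
  have : e ∈ List.ofFn (fun _ : Fin n => (Sum.inl 0 : SphE 1)) := he
  rw [List.mem_ofFn] at this
  obtain ⟨i, hi⟩ := this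
  exact hi.symm

lemma tube_tgt (n : ℕ) : (prefixPath pInf n).tgt = 0 := by
  rw [prefixPath_tgt]; rfl

lemma tube_mem_gens (p q : ℕ) : tubeSet p q ∈ gens :=
  ⟨prefixPath pInf p, prefixPath pInf q, by rw [tube_tgt, tube_tgt], rfl⟩

lemma mem_tube_top (p q : ℕ) (g : GG) (hx : g.1.1 = pInf) (hy : g.1.2.2 = pInf)
    (hk : g.1.2.1 = (q : ℤ) - (p : ℤ)) : g ∈ tubeSet p q := by
  refine ⟨pInf, ?_, ?_, ?_, ?_, ?_⟩
  · rw [tube_tgt]; rfl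
  · rw [tube_tgt]; rfl
  · rw [hx]
    show pInfF = catSeq (prefixPath pInf p).edges pInfF
    rw [catSeq_all0_pInfF _ (pInf_prefix_all0 p)]
  · rw [hk, prefixPath_length, prefixPath_length]
  · rw [hy]
    show pInfF = catSeq (prefixPath pInf q).edges pInfF
    rw [catSeq_all0_pInfF _ (pInf_prefix_all0 q)]

lemma tube_elts (p q : ℕ) (g' : GG) (h : g' ∈ tubeSet p q) :
    g'.1.2.1 = (q : ℤ) - (p : ℤ) ∧
      ((g'.1.1 = pInf ∧ g'.1.2.2 = pInf) ∨
        ∃ n : ℕ, g'.1.1 = pM (p + n) ∧ g'.1.2.2 = pM (q + n)) := by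
  obtain ⟨z, hz1, hz2, hx', hk', hy'⟩ := h
  constructor
  · rw [hk', prefixPath_length, prefixPath_length]
  · have hsrc : sphS 1 (z.1 0) = 0 := by rw [hz1, tube_tgt]
    rcases src_zero hsrc with hz | ⟨n, hz⟩
    · left
      rw [hz] at hx' hy'
      constructor
      · apply Subtype.ext
        rw [hx']
        exact catSeq_all0_pInfF _ (pInf_prefix_all0 p)
      · apply Subtype.ext
        rw [hy']
        exact catSeq_all0_pInfF _ (pInf_prefix_all0 q)
    · right
      refine ⟨n, ?_, ?_⟩
      · apply Subtype.ext
        rw [hz] at hx'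
        rw [hx']
        show catSeq _ (pMF n) = pMF (p + n)
        rw [catSeq_all0_pMF _ (pInf_prefix_all0 p) n, prefixPath_length]
      · apply Subtype.ext
        rw [hz] at hy'
        rw [hy']
        show catSeq _ (pMF n) = pMF (q + n)
        rw [catSeq_all0_pMF _ (pInf_prefix_all0 q) n, prefixPath_length]

/-- For an element of the graph groupoid, one leg is `ℓ₁^∞` iff the other is. -/
lemma leg_pInf_iff (g : GG) : g.1.1 = pInf ↔ g.1.2.2 = pInf := by
  obtain ⟨j, hj0, hjeq⟩ := g.2
  constructor
  · intro hx
    rw [hx, shift_iter_pInf] at hjeq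
    exact iter_eq_pInf hjeq.symm
  · intro hy
    rw [hy, shift_iter_pInf] at hjeq
    exact iter_eq_pInf hjeq

end TopWork

section PsiSection

variable (Ψ : ↥(PathSp (sphS 1) (sphT 1)) → ℕ∞)
  (hΨ2 : ∀ x : ↥(PathSp (sphS 1) (sphT 1)), (∀ j : ℕ, x.1 j = Sum.inl 1) → Ψ x = 0)
  (hΨm : ∀ (m : ℕ) (x : ↥(PathSp (sphS 1) (sphT 1))),
      (∀ j : ℕ, x.1 j =
        if j < m then (Sum.inl 0 : SphE 1) else if j = m then Sum.inr 0 else Sum.inl 1) →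
      Ψ x = (m : ℕ∞) + 1)
  (hΨ1 : ∀ x : ↥(PathSp (sphS 1) (sphT 1)), (∀ j : ℕ, x.1 j = Sum.inl 0) → Ψ x = ⊤)

include hΨ1 in
lemma Ψ_pInf : Ψ pInf = ⊤ := hΨ1 pInf fun _ => rfl

include hΨ2 in
lemma Ψ_pTwo : Ψ pTwo = 0 := hΨ2 pTwo fun _ => rfl

include hΨm in
lemma Ψ_pM (m : ℕ) : Ψ (pM m) = ((m + 1 : ℕ) : ℕ∞) := by
  rw [hΨm m (pM m) fun _ => rfl]
  push_cast
  rfl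

include hΨ2 hΨm hΨ1 in
lemma ΨΘ : ∀ m, Ψ (Θ m) = m := by
  intro m
  by_cases hm : m = ⊤
  · rw [hm, Θ_top, Ψ_pInf Ψ hΨ1]
  · lift m to ℕ using hm
    cases m with
    | zero => rw [Nat.cast_zero, Θ_zero, Ψ_pTwo Ψ hΨ2]
    | succ n => rw [Θ_coe_succ, Ψ_pM Ψ hΨm]

/-- The coordinate map `𝒢¹ → ℤ × ℕ̄ × ℕ̄`. -/
def πmap : G1 (sphS 1) (sphT 1) → ℤ × ℕ∞ × ℕ∞ := fun g => (g.1.2.1, Ψ g.1.1, Ψ g.1.2.2)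

include hΨm hΨ1 in
lemma G1_preimage_open (U : Set (ℤ × ℕ∞ × ℕ∞))
    (hC : ∀ k : ℤ, (k, ⊤, ⊤) ∈ U → ∃ p q : ℕ, (q : ℤ) - (p : ℤ) = k ∧
      ∀ n : ℕ, (k, ((p + n + 1 : ℕ) : ℕ∞), ((q + n + 1 : ℕ) : ℕ∞)) ∈ U) :
    IsOpen[G1Top (sphS 1) (sphT 1)] (πmap Ψ ⁻¹' U) := by
  rw [G1Top_eq]
  apply isOpen_generateFrom_of_basic
  intro g hg
  by_cases hy : g.1.2.2 = pInf
  · have hx : g.1.1 = pInf := (leg_pInf_iff g).2 hy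
    have hg' : (g.1.2.1, (⊤ : ℕ∞), (⊤ : ℕ∞)) ∈ U := by
      have he : πmap Ψ g = (g.1.2.1, ⊤, ⊤) := by
        unfold πmap; rw [hx, hy, Ψ_pInf Ψ hΨ1]
      have hg2 : πmap Ψ g ∈ U := hg
      rwa [he] at hg2
    obtain ⟨p, q, hpq, hmem⟩ := hC _ hg'
    refine ⟨tubeSet p q, tube_mem_gens p q, mem_tube_top p q g hx hy hpq.symm, ?_⟩
    intro g' hgt
    obtain ⟨hk, hcase⟩ := tube_elts p q g' hgt
    show πmap Ψ g' ∈ U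
    rcases hcase with ⟨hx', hy'⟩ | ⟨n, hx', hy'⟩
    · have he : πmap Ψ g' = (g.1.2.1, ⊤, ⊤) := by
        unfold πmap; rw [hx', hy', Ψ_pInf Ψ hΨ1, hk, hpq]
      rw [he]; exact hg'
    · have he : πmap Ψ g' = (g.1.2.1, ((p + n + 1 : ℕ) : ℕ∞), ((q + n + 1 : ℕ) : ℕ∞)) := by
        unfold πmap
        rw [hx', hy', Ψ_pM Ψ hΨm, Ψ_pM Ψ hΨm, hk, hpq]
      rw [he]; exact hmem n
  · have hx : g.1.1 ≠ pInf := fun h => hy ((leg_pInf_iff g).1 h)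
    obtain ⟨B, hB, hgB, hsub⟩ := isolated_basic g hx hy
    exact ⟨B, hB, hgB, fun g' hg'' => by
      rw [Set.mem_singleton_iff.mp (hsub hg'')]; exact hg⟩

end PsiSection

section PhiCont

/-- The section `𝓕¹ → 𝒢¹`. -/
noncomputable def φmap : {p : ℤ × ℤ × ℕ∞ // F1cond p} → G1 (sphS 1) (sphT 1) :=
  fun p => ⟨(Θ (addZE p.1.2.1 p.1.2.2), p.1.1, Θ p.1.2.2), mem_G1F p.1 p.2⟩

lemma contφ : @Continuous {p : ℤ × ℤ × ℕ∞ // F1cond p} (G1 (sphS 1) (sphT 1))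
    _ (G1Top (sphS 1) (sphT 1)) φmap := by
  rw [G1Top_eq]
  apply continuous_generateFrom_iff.mpr
  rintro U ⟨α, β, hαβ, rfl⟩
  rw [isOpen_iff_forall_mem_open]
  intro p hp
  by_cases hm : p.1.2.2 = ⊤
  · -- point at infinity: extract the structure of α and β
    have hp0 := hp
    obtain ⟨z, hz1, hz2, hxeq, hkeq, hyeq⟩ := hp0
    have hxeq' : (Θ (addZE p.1.2.1 p.1.2.2)).1 = catSeq α.edges z.1 := hxeq
    have hyeq' : (Θ p.1.2.2).1 = catSeq β.edges z.1 := hyeq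
    have hkeq' : p.1.1 = (β.edges.length : ℤ) - (α.edges.length : ℤ) := hkeq
    rw [hm, addZE_top, Θ_top] at hxeq'
    rw [hm, Θ_top] at hyeq'
    have hfunα : pInfF = catSeq α.edges z.1 := hxeq'
    have hfunβ : pInfF = catSeq β.edges z.1 := hyeq'
    have hzf : z.1 = pInfF := by
      funext i
      have h2 := congrFun hfunα (α.edges.length + i)
      unfold catSeq at h2
      rw [dif_neg (by omega)] at h2
      have e : α.edges.length + i - α.edges.length = i := by omega
      rw [e] at h2
      exact h2.symm
    have hαall : ∀ e ∈ α.edges, e = Sum.inl 0 := by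
      intro e he
      obtain ⟨⟨i, hi⟩, hie⟩ := List.mem_iff_get.mp he
      have h2 := congrFun hfunα i
      unfold catSeq at h2
      rw [dif_pos hi] at h2
      rw [← hie]
      exact h2.symm
    have hβall : ∀ e ∈ β.edges, e = Sum.inl 0 := by
      intro e he
      obtain ⟨⟨i, hi⟩, hie⟩ := List.mem_iff_get.mp he
      have h2 := congrFun hfunβ i
      unfold catSeq at h2
      rw [dif_pos hi] at h2
      rw [← hie]
      exact h2.symm
    have htgtα0 : α.tgt = 0 := by
      have h3 : sphS 1 (z.1 0) = α.tgt := hz1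
      rw [hzf] at h3
      exact h3.symm
    have htgtβ0 : β.tgt = 0 := by
      have h3 : sphS 1 (z.1 0) = β.tgt := hz2
      rw [hzf] at h3
      exact h3.symm
    have hk1 : p.1.1 + p.1.2.1 = 0 := p.2.2 hm
    refine ⟨Subtype.val ⁻¹' ({p.1.1} ×ˢ ({p.1.2.1} ×ˢ Set.Ioi ((β.edges.length : ℕ) : ℕ∞))),
      ?_, IsOpen.preimage continuous_subtype_val
        ((isOpen_discrete _).prod ((isOpen_discrete _).prod isOpen_Ioi)),
      ⟨rfl, rfl, ?_⟩⟩
    · intro p' hp'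
      simp only [Set.mem_preimage, Set.mem_prod, Set.mem_singleton_iff, Set.mem_Ioi] at hp'
      obtain ⟨e1, e2, e3⟩ := hp'
      by_cases hm' : p'.1.2.2 = ⊤
      · have : p' = p := Subtype.ext (Prod.ext e1 (Prod.ext e2 (by rw [hm', hm])))
        rw [this]; exact hp
      · obtain ⟨n', hn'⟩ : ∃ n' : ℕ, p'.1.2.2 = (n' : ℕ∞) := ⟨_, (ENat.coe_toNat hm').symm⟩
        have hn'Q : β.edges.length < n' := by
          rw [hn'] at e3
          exact_mod_cast e3
        set d := n' - 1 - β.edges.length with hd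
        refine ⟨pM d, ?_, ?_, ?_, ?_, ?_⟩
        · show sphS 1 (pMF d 0) = α.tgt
          rw [sphS_pMF_zero d, htgtα0]
        · show sphS 1 (pMF d 0) = β.tgt
          rw [sphS_pMF_zero d, htgtβ0]
        · show (Θ (addZE p'.1.2.1 p'.1.2.2)).1 = catSeq α.edges (pMF d)
          rw [catSeq_all0_pMF _ hαall d]
          have ha : addZE p'.1.2.1 p'.1.2.2 = (((α.edges.length + d) + 1 : ℕ) : ℕ∞) := by
            rw [hn', e2, addZE_coe (show ((n' : ℕ∞) ≠ ⊤) from by exact_mod_cast WithTop.coe_ne_top)]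
            congr 1
            rw [ENat.toNat_coe]
            omega
          rw [ha, Θ_coe_succ]
          rfl
        · show p'.1.1 = (β.edges.length : ℤ) - (α.edges.length : ℤ)
          rw [e1]; exact hkeq'
        · show (Θ p'.1.2.2).1 = catSeq β.edges (pMF d)
          rw [catSeq_all0_pMF _ hβall d]
          have hb : p'.1.2.2 = (((β.edges.length + d) + 1 : ℕ) : ℕ∞) := by
            rw [hn']
            congr 1
            omega
          rw [hb, Θ_coe_succ]
          rfl
    · show ((β.edges.length : ℕ) : ℕ∞) < p.1.2.2
      rw [hm]
      exact Ne.lt_top (by exact_mod_cast WithTop.coe_ne_top)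
  · -- isolated point
    refine ⟨Subtype.val ⁻¹' ({p.1.1} ×ˢ ({p.1.2.1} ×ˢ {p.1.2.2})), ?_,
      IsOpen.preimage continuous_subtype_val
        ((isOpen_discrete _).prod ((isOpen_discrete _).prod (ENat.isOpen_singleton hm))),
      ⟨rfl, rfl, rfl⟩⟩
    intro p' hp'
    simp only [Set.mem_preimage, Set.mem_prod, Set.mem_singleton_iff] at hp'
    obtain ⟨e1, e2, e3⟩ := hp'
    have : p' = p := Subtype.ext (Prod.ext e1 (Prod.ext e2 e3))
    rw [this]; exact hp

end PhiCont

section FinalCont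

variable (Ψ : ↥(PathSp (sphS 1) (sphT 1)) → ℕ∞)
  (hΨ2 : ∀ x : ↥(PathSp (sphS 1) (sphT 1)), (∀ j : ℕ, x.1 j = Sum.inl 1) → Ψ x = 0)
  (hΨm : ∀ (m : ℕ) (x : ↥(PathSp (sphS 1) (sphT 1))),
      (∀ j : ℕ, x.1 j =
        if j < m then (Sum.inl 0 : SphE 1) else if j = m then Sum.inr 0 else Sum.inl 1) →
      Ψ x = (m : ℕ∞) + 1)
  (hΨ1 : ∀ x : ↥(PathSp (sphS 1) (sphT 1)), (∀ j : ℕ, x.1 j = Sum.inl 0) → Ψ x = ⊤)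

include hΨm hΨ1 in
lemma cont_invA : @Continuous (ℤ × ℕ∞ × ℕ∞) (ℤ × ℤ × ℕ∞)
    (TopologicalSpace.coinduced (πmap Ψ) (G1Top (sphS 1) (sphT 1))) _ sheuInvA := by
  rw [continuous_def]
  intro O hO
  apply isOpen_coinduced.mpr
  apply G1_preimage_open Ψ hΨm hΨ1
  intro k hk
  have hpt : sheuInvA (k, ⊤, ⊤) = (k, -k, ⊤) :=
    Prod.ext rfl (Prod.ext (sheuDelta_top k ⊤) rfl)
  have hk' : (k, -k, (⊤ : ℕ∞)) ∈ O := by rw [← hpt]; exact hk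
  obtain ⟨u, v, hu, hv, hku, hmv, huv⟩ := isOpen_prod_iff.mp hO k (-k, ⊤) hk'
  obtain ⟨u2, w, hu2, hw, hmu2, htw, hu2w⟩ := isOpen_prod_iff.mp hv (-k) ⊤ hmv
  obtain ⟨a, ha, haw⟩ := nhds_top_basis.mem_iff.mp (hw.mem_nhds htw)
  set M := a.toNat with hM
  have haM : a = (M : ℕ∞) := (ENat.coe_toNat ha.ne).symm
  set p : ℕ := (-k).toNat + M + 1 with hp
  set q : ℕ := ((p : ℤ) + k).toNat with hq
  have hqk : (q : ℤ) = (p : ℤ) + k := by omega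
  have hMq : M < q := by omega
  refine ⟨p, q, by omega, ?_⟩
  intro n
  show sheuInvA (k, ((p+n+1 : ℕ) : ℕ∞), ((q+n+1 : ℕ) : ℕ∞)) ∈ O
  have hδ : sheuDelta (k, ((p+n+1 : ℕ) : ℕ∞), ((q+n+1 : ℕ) : ℕ∞)) = -k := by
    rw [sheuDelta_coe _ _
      (show (((q+n+1 : ℕ)) : ℕ∞) ≠ ⊤ from by exact_mod_cast WithTop.coe_ne_top)]
    rw [ENat.toNat_coe, ENat.toNat_coe]
    omega
  have heq : sheuInvA (k, ((p+n+1 : ℕ) : ℕ∞), ((q+n+1 : ℕ) : ℕ∞))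
      = (k, -k, ((q+n+1 : ℕ) : ℕ∞)) :=
    Prod.ext rfl (Prod.ext hδ rfl)
  rw [heq]
  apply huv
  refine ⟨hku, hu2w ⟨hmu2, haw ?_⟩⟩
  show a < ((q+n+1 : ℕ) : ℕ∞)
  rw [haM]
  exact_mod_cast (by omega : M < q + n + 1)

include hΨ2 hΨm hΨ1 in
lemma cont_toF : @Continuous {p : ℤ × ℤ × ℕ∞ // F1cond p}
    {p : ℤ × ℕ∞ × ℕ∞ // (p.2.1, p.2.2) ∈ RT}
    _
    (TopologicalSpace.induced Subtype.val
      (TopologicalSpace.coinduced (πmap Ψ) (G1Top (sphS 1) (sphT 1))))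
    (fun p => ⟨sheuToA p.1, sheuToA_mem p.1⟩) := by
  apply continuous_induced_rng.mpr
  have heq : (Subtype.val ∘ fun (p : {p : ℤ × ℤ × ℕ∞ // F1cond p}) =>
      (⟨sheuToA p.1, sheuToA_mem p.1⟩ : {p : ℤ × ℕ∞ × ℕ∞ // (p.2.1, p.2.2) ∈ RT})) =
      πmap Ψ ∘ φmap := by
    funext p
    show sheuToA p.1 = πmap Ψ (φmap p)
    unfold sheuToA πmap φmap
    refine Prod.ext rfl (Prod.ext ?_ ?_)
    · exact (ΨΘ Ψ hΨ2 hΨm hΨ1 _).symm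
    · exact (ΨΘ Ψ hΨ2 hΨm hΨ1 _).symm
  rw [heq]
  exact @Continuous.comp _ _ _ _ (G1Top (sphS 1) (sphT 1))
    (TopologicalSpace.coinduced (πmap Ψ) (G1Top (sphS 1) (sphT 1))) _ _
    continuous_coinduced_rng contφ

include hΨ2 hΨm hΨ1 in
lemma cont_invF : @Continuous {p : ℤ × ℕ∞ × ℕ∞ // (p.2.1, p.2.2) ∈ RT}
    {p : ℤ × ℤ × ℕ∞ // F1cond p}
    (TopologicalSpace.induced Subtype.val
      (TopologicalSpace.coinduced (πmap Ψ) (G1Top (sphS 1) (sphT 1))))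
    _
    (fun s => ⟨sheuInvA s.1, sheuInvA_mem s.1 s.2⟩) := by
  have hval : @Continuous {p : ℤ × ℕ∞ × ℕ∞ // (p.2.1, p.2.2) ∈ RT} (ℤ × ℕ∞ × ℕ∞)
      (TopologicalSpace.induced Subtype.val
        (TopologicalSpace.coinduced (πmap Ψ) (G1Top (sphS 1) (sphT 1))))
      (TopologicalSpace.coinduced (πmap Ψ) (G1Top (sphS 1) (sphT 1)))
      Subtype.val := continuous_induced_dom
  have hcomp : @Continuous {p : ℤ × ℕ∞ × ℕ∞ // (p.2.1, p.2.2) ∈ RT} (ℤ × ℤ × ℕ∞)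
      (TopologicalSpace.induced Subtype.val
        (TopologicalSpace.coinduced (πmap Ψ) (G1Top (sphS 1) (sphT 1)))) _
      (fun s => sheuInvA s.1) :=
    @Continuous.comp _ _ _
      (TopologicalSpace.induced Subtype.val
        (TopologicalSpace.coinduced (πmap Ψ) (G1Top (sphS 1) (sphT 1))))
      (TopologicalSpace.coinduced (πmap Ψ) (G1Top (sphS 1) (sphT 1))) _ _ _
      (cont_invA Ψ hΨm hΨ1) hval
  exact @Continuous.subtype_mk _ _ _
    (TopologicalSpace.induced Subtype.val
      (TopologicalSpace.coinduced (πmap Ψ) (G1Top (sphS 1) (sphT 1))))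
    F1cond _ hcomp (fun s => sheuInvA_mem s.1 s.2)

end FinalCont

lemma addZE_assoc (k1 k1' : ℤ) (m1 : ℕ∞) (h1 : m1 = ⊤ ∨ 0 ≤ (m1.toNat : ℤ) + k1) :
    addZE (k1 + k1') m1 = addZE k1' (addZE k1 m1) := by
  by_cases hm : m1 = ⊤
  · rw [hm, addZE_top, addZE_top, addZE_top]
  · have hc1 := h1.resolve_left hm
    rw [addZE_coe hm k1,
      addZE_coe (show (((((m1.toNat : ℤ) + k1).toNat : ℕ)) : ℕ∞) ≠ ⊤ from by
        exact_mod_cast WithTop.coe_ne_top) k1',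
      addZE_coe hm (k1 + k1'), ENat.toNat_coe]
    congr 1
    omega

/-- For the graph of `S³_q`, with `Ψ` as in Statement 11 and the
graph-groupoid topology transported to `ℤ × R_tail` along `(x,k,y) ↦ (k, Ψ(x), Ψ(y))`
(i.e. the coinduced topology, restricted to `ℤ × R_tail`), the map
`(k₀,k₁,m₁) ↦ (k₀, k₁ + m₁, m₁)` is a homeomorphism from `𝓕¹` (subspace of `ℤ × ℤ × ℕ̄`)
onto `ℤ × R_tail`, and it carries the composition of `𝓕¹` to that of `𝒢¹`. -/
theorem stmt_13
    (Ψ : ↥(PathSp (sphS 1) (sphT 1)) → ℕ∞)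
    (hΨ2 : ∀ x : ↥(PathSp (sphS 1) (sphT 1)),
      (∀ j : ℕ, x.1 j = Sum.inl 1) → Ψ x = 0)
    (hΨm : ∀ (m : ℕ) (x : ↥(PathSp (sphS 1) (sphT 1))),
      (∀ j : ℕ, x.1 j =
        if j < m then (Sum.inl 0 : SphE 1) else if j = m then Sum.inr 0 else Sum.inl 1) →
      Ψ x = (m : ℕ∞) + 1)
    (hΨ1 : ∀ x : ↥(PathSp (sphS 1) (sphT 1)),
      (∀ j : ℕ, x.1 j = Sum.inl 0) → Ψ x = ⊤) :
    ∃ h : @Homeomorph {p : ℤ × ℤ × ℕ∞ // F1cond p} {p : ℤ × ℕ∞ × ℕ∞ // (p.2.1, p.2.2) ∈ RT}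
      inferInstance
      (TopologicalSpace.induced Subtype.val
        (TopologicalSpace.coinduced
          (fun g : G1 (sphS 1) (sphT 1) => ((g.1.2.1, Ψ g.1.1, Ψ g.1.2.2) : ℤ × ℕ∞ × ℕ∞))
          (G1Top (sphS 1) (sphT 1)))),
      (∀ p : {p : ℤ × ℤ × ℕ∞ // F1cond p},
        (h p).1 = (p.1.1, addZE p.1.2.1 p.1.2.2, p.1.2.2)) ∧
      (∀ (k0 k1 k0' k1' : ℤ) (m1 : ℕ∞),
        F1cond (k0, k1, m1) → F1cond (k0', k1', addZE k1 m1) →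
        ((k0 + k0', addZE (k1 + k1') m1, m1) : ℤ × ℕ∞ × ℕ∞)
          = (k0' + k0, addZE k1' (addZE k1 m1), m1)) := by
  refine ⟨@Homeomorph.mk _ _ _
    (TopologicalSpace.induced Subtype.val
      (TopologicalSpace.coinduced
        (fun g : G1 (sphS 1) (sphT 1) => ((g.1.2.1, Ψ g.1.1, Ψ g.1.2.2) : ℤ × ℕ∞ × ℕ∞))
        (G1Top (sphS 1) (sphT 1))))
    sheuEquiv ?_ ?_, fun p => rfl, ?_⟩
  · exact cont_toF Ψ hΨ2 hΨm hΨ1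
  · exact cont_invF Ψ hΨ2 hΨm hΨ1
  · intro k0 k1 k0' k1' m1 h1 h2
    refine Prod.ext (by show k0 + k0' = k0' + k0; omega) (Prod.ext ?_ rfl)
    show addZE (k1 + k1') m1 = addZE k1' (addZE k1 m1)
    apply addZE_assoc
    have hc : (k0, k1, m1).2.2 = ⊤ ∨ 0 ≤ ((k0, k1, m1).2.2.toNat : ℤ) + (k0, k1, m1).2.1 :=
      h1.1
    simpa only using hc
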